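/- Let R > 0, and let G: [0,∞) → R be as in the Weinberger construction: G(r) = g(r) on [0,R] and G(r)=g(R) on [R,∞), where g solves g'' + ((N−1)/r)g' + (μ − (N−1)/r²)g = 0 on (0,R) with g(0)=0, g'(R)=0, g>0 and g'>0 on (0,R), and μ = μ₁(B_R) is the first nonzero Neumann eigenvalue of the ball B_R. Then the function r ↦ G'(r)² + (N−1)G(r)²/r² is (weakly) decreasing on (0,∞). -/

import Mathlib

open MeasureTheory Metric
open scoped RealInnerProductSpace

/-- Variational (min-max) definition of the `k`-th Neumann eigenvalue of a domain
`Ω ⊂ ℝ^N` (counting `μ₀ = 0`, so `k = 1` is the first nonzero eigenvalue for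
connected `Ω`): the infimum of the numbers `m ≥ 0` bounding the Rayleigh quotient
on some `k`-dimensional subspace of mean-zero test functions. -/
noncomputable def neumannEV {N : ℕ} (Ω : Set (EuclideanSpace ℝ (Fin N))) (k : ℕ) : ℝ :=
  sInf { m : ℝ | 0 ≤ m ∧
    ∃ S : Submodule ℝ (EuclideanSpace ℝ (Fin N) → ℝ),
      Module.finrank ℝ S = k ∧
      (∀ u ∈ S, ContDiff ℝ 1 u ∧ (∫ x in Ω, u x) = 0) ∧
      (∀ u ∈ S, (∫ x in Ω, ‖fderiv ℝ u x‖ ^ 2) ≤ m * ∫ x in Ω, (u x) ^ 2) }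

/-- if `g` solves the Weinberger ODE
`g'' + ((N-1)/r) g' + (μ - (N-1)/r²) g = 0` on `(0,R)` with `μ = μ₁(B_R)`,
`g(0)=0`, `g'(R)=0`, `g > 0` and `g' > 0` on `(0,R)`, and `G` is the profile equal to
`g` on `[0,R]` and to `g(R)` afterwards, then `r ↦ G'(r)² + (N-1)G(r)²/r²`
is weakly decreasing on `(0,∞)`. -/
theorem stmt4 {N : ℕ} (hN : 2 ≤ N) (R : ℝ) (hR : 0 < R)
    (g G : ℝ → ℝ) (hg : ContDiffOn ℝ 2 g (Set.Ici 0))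
    (hODE : ∀ r ∈ Set.Ioo (0 : ℝ) R,
      deriv (deriv g) r + ((N - 1 : ℝ) / r) * deriv g r +
        (neumannEV (ball (0 : EuclideanSpace ℝ (Fin N)) R) 1 - (N - 1 : ℝ) / r ^ 2) * g r = 0)
    (hg0 : g 0 = 0) (hg'R : deriv g R = 0)
    (hgpos : ∀ r ∈ Set.Ioo (0 : ℝ) R, 0 < g r)
    (hg'pos : ∀ r ∈ Set.Ioo (0 : ℝ) R, 0 < deriv g r)
    (hG₁ : ∀ r ∈ Set.Icc (0 : ℝ) R, G r = g r)
    (hG₂ : ∀ r, R ≤ r → G r = g R) :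
    AntitoneOn (fun r : ℝ => (deriv G r) ^ 2 + (N - 1 : ℝ) * (G r) ^ 2 / r ^ 2)
      (Set.Ioi 0) := by
  set μ := neumannEV (ball (0 : EuclideanSpace ℝ (Fin N)) R) 1 with hμdef
  have hμ : 0 ≤ μ := Real.sInf_nonneg fun m hm => hm.1
  have hN1 : (1 : ℝ) ≤ (N : ℝ) := by exact_mod_cast Nat.one_le_of_lt hN
  have hNpos : (0 : ℝ) ≤ (N : ℝ) - 1 := by linarith
  -- smoothness on Ioi 0
  have hgO : ContDiffOn ℝ 2 g (Set.Ioi 0) := hg.mono fun x hx => Set.mem_Ici.mpr (le_of_lt hx)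
  have hg'O : ContDiffOn ℝ 1 (deriv g) (Set.Ioi 0) :=
    hgO.deriv_of_isOpen isOpen_Ioi (by norm_num)
  have hgdiff : ∀ r ∈ Set.Ioi (0:ℝ), DifferentiableAt ℝ g r := fun r hr =>
    (hgO.contDiffAt (isOpen_Ioi.mem_nhds hr)).differentiableAt (by norm_num)
  have hg'diff : ∀ r ∈ Set.Ioi (0:ℝ), DifferentiableAt ℝ (deriv g) r := fun r hr =>
    (hg'O.contDiffAt (isOpen_Ioi.mem_nhds hr)).differentiableAt one_ne_zero
  -- derivative of G at R is 0
  have hGR : HasDerivAt G 0 R := by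
    have hL : HasDerivWithinAt G 0 (Set.Iic R) R := by
      have hgR : HasDerivWithinAt g 0 (Set.Iic R) R := by
        have := (hgdiff R hR).hasDerivAt
        rw [hg'R] at this
        exact this.hasDerivWithinAt
      apply hgR.congr_of_eventuallyEq ?_ (hG₁ R ⟨hR.le, le_rfl⟩)
      have hmem : Set.Ioi (0:ℝ) ∈ nhdsWithin R (Set.Iic R) :=
        nhdsWithin_le_nhds (isOpen_Ioi.mem_nhds hR)
      filter_upwards [hmem, self_mem_nhdsWithin] with r hr hr'
      exact hG₁ r ⟨le_of_lt hr, hr'⟩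
    have hRt : HasDerivWithinAt G 0 (Set.Ici R) R := by
      have hc : HasDerivWithinAt (fun _ : ℝ => g R) 0 (Set.Ici R) R :=
        (hasDerivAt_const R (g R)).hasDerivWithinAt
      exact hc.congr (fun x hx => hG₂ x hx) (hG₂ R le_rfl)
    have := hL.union hRt
    rw [Set.Iic_union_Ici] at this
    exact hasDerivWithinAt_univ.mp this
  have hderivGR : deriv G R = 0 := hGR.deriv
  -- deriv G on Ioo 0 R
  have hderivG : ∀ r ∈ Set.Ioo (0:ℝ) R, deriv G r = deriv g r := by
    intro r hr
    apply Filter.EventuallyEq.deriv_eq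
    filter_upwards [Icc_mem_nhds hr.1 hr.2] with x hx
    exact hG₁ x hx
  -- deriv G beyond R
  have hderivG2 : ∀ r, R ≤ r → deriv G r = 0 := by
    intro r hr
    rcases eq_or_lt_of_le hr with h | h
    · rw [← h]; exact hderivGR
    · have : deriv G r = deriv (fun _ : ℝ => g R) r := by
        apply Filter.EventuallyEq.deriv_eq
        filter_upwards [Ioi_mem_nhds h] with x hx
        exact hG₂ x (le_of_lt hx)
      rw [this, deriv_const]
  -- the smooth profile
  set φ : ℝ → ℝ := fun r => (deriv g r)^2 + ((N:ℝ) - 1) * (g r)^2 / r^2 with hφdef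
  -- φ is antitone on Ioc 0 R
  have hφanti : AntitoneOn φ (Set.Ioc 0 R) := by
    apply antitoneOn_of_deriv_nonpos (convex_Ioc 0 R)
    · -- continuity
      apply ContinuousOn.add
      · exact ((hg'O.continuousOn.mono (Set.Ioc_subset_Ioi_self)).pow 2)
      · apply ContinuousOn.div
        · exact (continuousOn_const.mul ((hgO.continuousOn.mono Set.Ioc_subset_Ioi_self).pow 2))
        · exact (continuousOn_pow 2).mono (Set.subset_univ _)
        · exact fun x hx => pow_ne_zero _ (ne_of_gt hx.1)
    all_goals rw [interior_Ioc]
    · intro r hr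
      have h1 : DifferentiableAt ℝ φ r := by
        apply DifferentiableAt.add
        · exact (hg'diff r hr.1).pow 2
        · exact (((hgdiff r hr.1).pow 2).const_mul _).div (differentiableAt_pow 2)
            (pow_ne_zero _ (ne_of_gt hr.1))
      exact h1.differentiableWithinAt
    · intro r hr
      have hrpos : (0:ℝ) < r := hr.1
      have hφ' : HasDerivAt φ
          (2 * deriv g r * deriv (deriv g) r +
            (((N:ℝ)-1) * (2 * g r * deriv g r) * r^2 - ((N:ℝ)-1) * (g r)^2 * (2*r)) / (r^2)^2) r := by
        have h1 : HasDerivAt (fun r => (deriv g r)^2) (2 * deriv g r * deriv (deriv g) r) r := by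
          have := ((hg'diff r hrpos).hasDerivAt).fun_pow 2
          exact this.congr_deriv (by push_cast; ring)
        have h2 : HasDerivAt (fun r => ((N:ℝ)-1) * (g r)^2)
            (((N:ℝ)-1) * (2 * g r * deriv g r)) r := by
          have := (((hgdiff r hrpos).hasDerivAt).fun_pow 2).const_mul ((N:ℝ)-1)
          exact this.congr_deriv (by push_cast; ring)
        have h3 : HasDerivAt (fun r : ℝ => r^2) (2*r) r := by
          simpa using hasDerivAt_pow 2 r
        exact h1.add (h2.div h3 (pow_ne_zero _ (ne_of_gt hrpos)))
      rw [hφ'.deriv]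
      set a := g r with ha
      set b := deriv g r with hb
      set c := deriv (deriv g) r with hc
      have hode := hODE r hr
      have hcval : c = -(((N:ℝ)-1)/r) * b - (μ - ((N:ℝ)-1)/r^2) * a := by
        rw [hμdef] at hode ⊢; linarith
      have hapos : 0 < a := hgpos r hr
      have hbpos : 0 < b := hg'pos r hr
      have key : 2 * b * c + (((N:ℝ)-1) * (2 * a * b) * r^2 - ((N:ℝ)-1) * a^2 * (2*r)) / (r^2)^2
          = -(2*μ*a*b) - 2*((N:ℝ)-1) * (r*b - a)^2 / r^3 := by
        rw [hcval]
        field_simp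
        ring
      rw [key]
      have h4 : 0 ≤ 2*μ*a*b := by positivity
      have h5 : 0 ≤ 2*((N:ℝ)-1) * (r*b - a)^2 / r^3 := by
        apply div_nonneg _ (by positivity)
        have : (0:ℝ) ≤ (r*b-a)^2 := sq_nonneg _
        nlinarith
      linarith
  -- F agrees with φ on Ioc 0 R
  have hFφ : ∀ r ∈ Set.Ioc (0:ℝ) R, deriv G r ^ 2 + ((N:ℝ) - 1) * G r ^ 2 / r ^ 2 = φ r := by
    intro r hr
    rcases eq_or_lt_of_le hr.2 with h | h
    · rw [h, hderivGR, hG₁ R ⟨hR.le, le_rfl⟩, hφdef]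
      simp [hg'R]
    · rw [hderivG r ⟨hr.1, h⟩, hG₁ r ⟨hr.1.le, hr.2⟩]
  -- F on Ici R
  have hFB : ∀ r, R ≤ r → deriv G r ^ 2 + ((N:ℝ) - 1) * G r ^ 2 / r ^ 2
      = ((N:ℝ)-1) * (g R)^2 / r^2 := by
    intro r hr
    rw [hderivG2 r hr, hG₂ r hr]
    ring
  have hB : ∀ u v : ℝ, R ≤ u → u ≤ v →
      ((N:ℝ)-1) * (g R)^2 / v^2 ≤ ((N:ℝ)-1) * (g R)^2 / u^2 := by
    intro u v hu huv
    have hupos : 0 < u := lt_of_lt_of_le hR hu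
    have h2 : u^2 ≤ v^2 := pow_le_pow_left₀ hupos.le huv 2
    gcongr
  -- glue
  intro x hx y hy hxy
  simp only
  by_cases hyR : y ≤ R
  · rw [hFφ x ⟨hx, le_trans hxy hyR⟩, hFφ y ⟨hy, hyR⟩]
    exact hφanti ⟨hx, le_trans hxy hyR⟩ ⟨hy, hyR⟩ hxy
  · push_neg at hyR
    by_cases hxR : R ≤ x
    · rw [hFB x hxR, hFB y (le_trans hxR hxy)]
      exact hB x y hxR hxy
    · push_neg at hxR
      have h1 : deriv G y ^ 2 + ((N:ℝ) - 1) * G y ^ 2 / y ^ 2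
          ≤ deriv G R ^ 2 + ((N:ℝ) - 1) * G R ^ 2 / R ^ 2 := by
        rw [hFB y hyR.le, hFB R le_rfl]
        exact hB R y le_rfl hyR.le
      have h2 : deriv G R ^ 2 + ((N:ℝ) - 1) * G R ^ 2 / R ^ 2
          ≤ deriv G x ^ 2 + ((N:ℝ) - 1) * G x ^ 2 / x ^ 2 := by
        rw [hFφ x ⟨hx, hxR.le⟩, hFφ R ⟨hR, le_rfl⟩]
        exact hφanti ⟨hx, hxR.le⟩ ⟨hR, le_rfl⟩ hxR.le
      linarith
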